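/- There exists a regular, zero-dimensional, separable, first-countable, non-normal topological space of cardinality ω₁. -/

import Mathlib

open Cardinal Set Filter Topology TopologicalSpace

/-- `A` is almost contained in `B`. -/
def almSub (A B : Set ℕ) : Prop := (A \ B).Finite

/-- `f ≤* g`: eventual domination. -/
def evLE (f g : ℕ → ℕ) : Prop := {n : ℕ | g n < f n}.Finite

/-- A splitting family on `ω`. -/
def IsSplittingFamily (S : Set (Set ℕ)) : Prop :=
  ∀ A : Set ℕ, A.Infinite → ∃ s ∈ S, (A ∩ s).Infinite ∧ (A \ s).Infinite

/-- The splitting number `𝔰`. -/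
noncomputable def sNum : Cardinal :=
  sInf {c | ∃ S : Set (Set ℕ), IsSplittingFamily S ∧ #S = c}

/-- An `≤*`-unbounded family. -/
def IsUnboundedFamily (F : Set (ℕ → ℕ)) : Prop :=
  ∀ g : ℕ → ℕ, ∃ f ∈ F, ¬ evLE f g

/-- The bounding number `𝔟`. -/
noncomputable def bNum : Cardinal :=
  sInf {c | ∃ F : Set (ℕ → ℕ), IsUnboundedFamily F ∧ #F = c}

/-- The weight of a topological space. -/
noncomputable def wt (X : Type*) [TopologicalSpace X] : Cardinal :=
  sInf {c | ∃ B : Set (Set X), IsTopologicalBasis B ∧ #B = c}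

/-- Zero-dimensional: there is a base of clopen sets. -/
def ZeroDim (X : Type*) [TopologicalSpace X] : Prop :=
  ∃ B : Set (Set X), IsTopologicalBasis B ∧ ∀ s ∈ B, IsClopen s

/-- Countably compact in the sense of the paper: every closed discrete subset is finite. -/
def CtblCompact (X : Type*) [TopologicalSpace X] : Prop :=
  ∀ A : Set X, IsClosed A → DiscreteTopology A → A.Finite

/-- Feebly compact: every locally finite family of nonempty open sets is finite. -/
def FeeblyCompact (X : Type*) [TopologicalSpace X] : Prop :=
  ∀ F : Set (Set X), (∀ u ∈ F, IsOpen u ∧ u.Nonempty) →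
    LocallyFinite (fun u : F => (u : Set X)) → F.Finite

/-- Pseudocompact: Tychonoff and every continuous real-valued function is bounded. -/
def Pseudocompact (X : Type*) [TopologicalSpace X] : Prop :=
  T35Space X ∧ ∀ f : X → ℝ, Continuous f → ∃ M : ℝ, ∀ x, |f x| ≤ M

/-- Pseudonormal space. -/
def Pseudonormal (X : Type*) [TopologicalSpace X] : Prop :=
  ∀ F₀ F₁ : Set X, IsClosed F₀ → IsClosed F₁ → F₀.Countable → Disjoint F₀ F₁ →
    ∃ U₀ U₁ : Set X, IsOpen U₀ ∧ IsOpen U₁ ∧ F₀ ⊆ U₀ ∧ F₁ ⊆ U₁ ∧ Disjoint U₀ U₁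

/-- The Pixley–Roy topology on the finite subsets of `X`. -/
def PRtop (X : Type*) [TopologicalSpace X] : TopologicalSpace (Finset X) :=
  TopologicalSpace.generateFrom
    {t | ∃ (F : Finset X) (U : Set X), IsOpen U ∧
      t = {A : Finset X | F ⊆ A ∧ (A : Set X) ⊆ U}}

/-- A subspace of the Cantor space is a λ-set if each of its countable subsets is Gδ in it. -/
def IsLambdaSet (X : Set (ℕ → Bool)) : Prop :=
  ∀ C : Set X, C.Countable → IsGδ C

section LuzinStep

private lemma luzin_step (D : ℕ → Set ℕ) (hAD : ∀ i j, i ≠ j → (D i ∩ D j).Finite)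
    (hinf : ∀ i, (D i).Infinite) :
    ∃ B : Set ℕ, B.Infinite ∧ (∀ i, (B ∩ D i).Finite) ∧
      ∀ n : ℕ, {i : ℕ | B ∩ D i ⊆ Set.Iio n} ⊆ Set.Iio n := by
  have hS : ∀ k, (D k \ ((⋃ i ∈ Finset.range k, D i) ∪ Set.Iio k)).Nonempty := by
    intro k
    have hfin : (D k ∩ ((⋃ i ∈ Finset.range k, D i) ∪ Set.Iio k)).Finite := by
      have : D k ∩ ((⋃ i ∈ Finset.range k, D i) ∪ Set.Iio k) ⊆
          (⋃ i ∈ Finset.range k, D k ∩ D i) ∪ Set.Iio k := by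
        intro x hx
        rcases hx.2 with h | h
        · obtain ⟨i, hi, hxi⟩ := Set.mem_iUnion₂.mp h
          exact Or.inl (Set.mem_iUnion₂.mpr ⟨i, hi, hx.1, hxi⟩)
        · exact Or.inr h
      refine Set.Finite.subset (Set.Finite.union ?_ (Set.finite_Iio k)) this
      refine Set.Finite.biUnion (Finset.finite_toSet _) fun i hi => ?_
      exact hAD k i (by simp at hi; omega)
    have h2 := (hinf k).diff hfin
    refine h2.nonempty.mono ?_
    rw [Set.diff_self_inter]
  classical
  have hex : ∀ k, ∃ m, m ∈ D k \ ((⋃ i ∈ Finset.range k, D i) ∪ Set.Iio k) := fun k => hS k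
  choose x hxspec using hex
  have hxmem : ∀ k, x k ∈ D k ∧ (∀ i < k, x k ∉ D i) ∧ k ≤ x k := by
    intro k
    have := hxspec k
    refine ⟨this.1, fun i hi hmem => this.2 (Or.inl ?_), ?_⟩
    · exact Set.mem_iUnion₂.mpr ⟨i, by simpa using hi, hmem⟩
    · by_contra h
      exact this.2 (Or.inr (Set.mem_Iio.mpr (by omega)))
  have hxinj : Function.Injective x := by
    intro k j hkj
    by_contra hne
    rcases Nat.lt_or_ge k j with h | h
    · exact (hxmem j).2.1 k h (hkj ▸ (hxmem k).1)
    · exact (hxmem k).2.1 j (by omega) (hkj ▸ (hxmem j).1)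
  refine ⟨Set.range x, Set.infinite_range_of_injective hxinj, ?_, ?_⟩
  · intro i
    have hsub : Set.range x ∩ D i ⊆ x '' Set.Iic i := by
      rintro y ⟨⟨k, rfl⟩, hyD⟩
      refine ⟨k, ?_, rfl⟩
      by_contra h
      exact (hxmem k).2.1 i (by simpa using h) hyD
    exact Set.Finite.subset ((Set.finite_Iic i).image x) hsub
  · intro n i hi
    have hxi : x i ∈ Set.range x ∩ D i := ⟨⟨i, rfl⟩, (hxmem i).1⟩
    have := hi hxi
    simp only [Set.mem_Iio] at this ⊢
    exact lt_of_le_of_lt (hxmem i).2.2 this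

end LuzinStep

section LuzinFam

private def Cfam (n : ℕ) : Set ℕ := Set.range (Nat.pair n)

private lemma Cfam_infinite (n : ℕ) : (Cfam n).Infinite :=
  Set.infinite_range_of_injective (fun a b h => by
    have := Nat.pair_eq_pair.mp h; exact this.2)

private lemma Cfam_disjoint {n m : ℕ} (h : n ≠ m) : Cfam n ∩ Cfam m = ∅ := by
  ext x
  simp only [Cfam, Set.mem_inter_iff, Set.mem_range, Set.mem_empty_iff_false, iff_false]
  rintro ⟨⟨a, rfl⟩, ⟨b, hb⟩⟩
  exact h (Nat.pair_eq_pair.mp hb).1.symm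

private abbrev W5 : Type := (Cardinal.aleph 1).ord.ToType

private lemma W5_card : #W5 = Cardinal.aleph 1 := Cardinal.mk_ord_toType _

private lemma W5_Iio_countable (α : W5) : (Set.Iio α).Countable := by
  rw [Cardinal.countable_iff_lt_aleph_one]
  exact Cardinal.mk_Iio_ord_toType α

private instance {α : W5} : Countable {b : W5 // b < α} := (W5_Iio_countable α).to_subtype

private noncomputable def Afam : W5 → Set ℕ :=
  (IsWellFounded.wf (α := W5) (r := (· < ·))).fix
    (fun α rec => Classical.epsilon fun B : Set ℕ =>
      B.Infinite ∧ (∀ n, (B ∩ Cfam n).Finite) ∧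
      (∀ β : W5, ∀ h : β < α, (B ∩ rec β h).Finite) ∧
      (∀ n : ℕ, {β : {b : W5 // b < α} | B ∩ rec β.1 β.2 ⊆ Set.Iio n}.Finite))

private lemma Afam_eq (α : W5) : Afam α = Classical.epsilon fun B : Set ℕ =>
    B.Infinite ∧ (∀ n, (B ∩ Cfam n).Finite) ∧
    (∀ β : W5, ∀ _h : β < α, (B ∩ Afam β).Finite) ∧
    (∀ n : ℕ, {β : {b : W5 // b < α} | B ∩ Afam β.1 ⊆ Set.Iio n}.Finite) := by
  rw [Afam, WellFounded.fix_eq]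

end LuzinFam

private lemma Afam_good : ∀ α : W5, (Afam α).Infinite ∧ (∀ n, (Afam α ∩ Cfam n).Finite) ∧
    (∀ β, β < α → (Afam α ∩ Afam β).Finite) ∧
    (∀ n : ℕ, {β : {b : W5 // b < α} | Afam α ∩ Afam β.1 ⊆ Set.Iio n}.Finite) := by
  intro α
  induction α using ((IsWellFounded.wf (α := W5) (r := (· < ·)))).induction with
  | _ α IH =>
  -- set up the enumeration
  have : Nonempty (Denumerable (ℕ ⊕ {b : W5 // b < α})) := nonempty_denumerable _
  obtain ⟨dd⟩ := this
  let e : ℕ ≃ (ℕ ⊕ {b : W5 // b < α}) := (Denumerable.eqv _).symm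
  let E : (ℕ ⊕ {b : W5 // b < α}) → Set ℕ := Sum.elim Cfam (fun β => Afam β.1)
  have hEinf : ∀ t, (E t).Infinite := by
    rintro (n | β)
    · exact Cfam_infinite n
    · exact (IH β.1 β.2).1
  have hEAD : ∀ t t', t ≠ t' → (E t ∩ E t').Finite := by
    rintro (n | β) (m | γ) hne
    · have : n ≠ m := fun h => hne (by rw [h])
      rw [show E (Sum.inl n) ∩ E (Sum.inl m) = Cfam n ∩ Cfam m from rfl, Cfam_disjoint this]
      exact Set.finite_empty
    · have := (IH γ.1 γ.2).2.1 n
      rw [show E (Sum.inl n) ∩ E (Sum.inr γ) = Cfam n ∩ Afam γ.1 from rfl, Set.inter_comm]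
      exact this
    · exact (IH β.1 β.2).2.1 m
    · have hbg : β.1 ≠ γ.1 := by
        intro h; exact hne (by cases β; cases γ; simp_all)
      rcases lt_or_gt_of_ne hbg with h | h
      · exact ((IH γ.1 γ.2).2.2.1 β.1 h).subset (by rw [Set.inter_comm]; exact subset_rfl)
      · exact (IH β.1 β.2).2.2.1 γ.1 h
  obtain ⟨B, hBinf, hBfin, hBluzin⟩ :=
    luzin_step (fun k => E (e k)) (fun i j hij => hEAD _ _ (fun h => hij (e.injective h)))
      (fun i => hEinf _)
  have hBspec : B.Infinite ∧ (∀ n, (B ∩ Cfam n).Finite) ∧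
      (∀ β : W5, ∀ _h : β < α, (B ∩ Afam β).Finite) ∧
      (∀ n : ℕ, {β : {b : W5 // b < α} | B ∩ Afam β.1 ⊆ Set.Iio n}.Finite) := by
    refine ⟨hBinf, ?_, ?_, ?_⟩
    · intro n
      have := hBfin (e.symm (Sum.inl n))
      rwa [show E (e (e.symm (Sum.inl n))) = Cfam n by rw [e.apply_symm_apply]; rfl] at this
    · intro β hβ
      have := hBfin (e.symm (Sum.inr ⟨β, hβ⟩))
      rwa [show E (e (e.symm (Sum.inr ⟨β, hβ⟩))) = Afam β by rw [e.apply_symm_apply]; rfl] at this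
    · intro n
      have hmap : (fun β : {b : W5 // b < α} => e.symm (Sum.inr β)) ''
          {β | B ∩ Afam β.1 ⊆ Set.Iio n} ⊆ Set.Iio n := by
        rintro i ⟨β, hβ, rfl⟩
        apply hBluzin n
        simpa only [Set.mem_setOf_eq, e.apply_symm_apply, E, Sum.elim_inr] using hβ
      have := (Set.finite_Iio n).subset hmap
      exact Set.Finite.of_finite_image this
        ((e.symm.injective.comp Sum.inr_injective).injOn)
  have heps := Classical.epsilon_spec (p := fun B : Set ℕ =>
      B.Infinite ∧ (∀ n, (B ∩ Cfam n).Finite) ∧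
      (∀ β : W5, ∀ _h : β < α, (B ∩ Afam β).Finite) ∧
      (∀ n : ℕ, {β : {b : W5 // b < α} | B ∩ Afam β.1 ⊆ Set.Iio n}.Finite)) ⟨B, hBspec⟩
  rw [← Afam_eq α] at heps
  exact heps

private lemma Afam_inf (α : W5) : (Afam α).Infinite := (Afam_good α).1

private lemma Afam_AD {α β : W5} (h : α ≠ β) : (Afam α ∩ Afam β).Finite := by
  rcases lt_or_gt_of_ne h with hlt | hlt
  · exact ((Afam_good β).2.2.1 α hlt).subset (fun x hx => ⟨hx.2, hx.1⟩)
  · exact (Afam_good α).2.2.1 β hlt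

private def pre5 (U : Set (ℕ ⊕ W5)) : Set ℕ := {n | Sum.inl n ∈ U}

private def t5 : TopologicalSpace (ℕ ⊕ W5) where
  IsOpen U := ∀ α, Sum.inr α ∈ U → (Afam α \ pre5 U).Finite
  isOpen_univ := by
    intro α _
    have : Afam α \ pre5 Set.univ = ∅ := by
      ext x; simp [pre5]
    simp [this]
  isOpen_inter := by
    intro U V hU hV α hα
    have hsub : Afam α \ pre5 (U ∩ V) ⊆ (Afam α \ pre5 U) ∪ (Afam α \ pre5 V) := by
      intro x hx
      by_cases hxu : x ∈ pre5 U
      · exact Or.inr ⟨hx.1, fun hxv => hx.2 ⟨hxu, hxv⟩⟩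
      · exact Or.inl ⟨hx.1, hxu⟩
    exact ((hU α hα.1).union (hV α hα.2)).subset hsub
  isOpen_sUnion := by
    intro S hS α hα
    obtain ⟨U, hUS, hαU⟩ := hα
    refine ((hS U hUS α hαU).subset fun x hx => ⟨hx.1, fun hxu => hx.2 ?_⟩)
    exact ⟨U, hUS, hxu⟩

private def N5 (α : W5) (F : Finset ℕ) : Set (ℕ ⊕ W5) :=
  {Sum.inr α} ∪ Sum.inl '' (Afam α \ ↑F)

private lemma mem_N5_self (α : W5) (F : Finset ℕ) : Sum.inr α ∈ N5 α F := Or.inl rfl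

private lemma pre5_N5 (α : W5) (F : Finset ℕ) : pre5 (N5 α F) = Afam α \ ↑F := by
  ext m
  simp only [pre5, N5, Set.mem_setOf_eq, Set.mem_union, Set.mem_singleton_iff,
    Set.mem_image]
  constructor
  · rintro (h | ⟨x, hx, hxe⟩)
    · exact absurd h (by simp)
    · rwa [← Sum.inl_injective hxe]
  · intro h; exact Or.inr ⟨m, h, rfl⟩

private lemma inr_mem_N5 {α β : W5} {F : Finset ℕ} (h : Sum.inr β ∈ N5 α F) : β = α := by
  rcases h with h | ⟨x, _, hx⟩
  · exact Sum.inr_injective h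
  · exact absurd hx (by simp)

private lemma isOpen_N5 (α : W5) (F : Finset ℕ) : IsOpen[t5] (N5 α F) := by
  intro β hβ
  rw [inr_mem_N5 hβ, pre5_N5]
  exact (F.finite_toSet.subset (fun x hx => by
    simp only [Set.mem_diff, pre5_N5] at hx
    by_contra hxF
    exact hx.2 ⟨hx.1, hxF⟩))

private lemma isOpen_inl_singleton (n : ℕ) : IsOpen[t5] ({Sum.inl n} : Set (ℕ ⊕ W5)) := by
  intro β hβ
  exact absurd hβ (by simp)

private lemma isClosed_inl_singleton (n : ℕ) :
    IsClosed[t5] ({Sum.inl n} : Set (ℕ ⊕ W5)) := by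
  rw [← @isOpen_compl_iff _ _ t5]
  intro β _
  refine (Set.finite_singleton n).subset fun x hx => ?_
  simp only [pre5, Set.mem_compl_iff, Set.mem_setOf_eq, Set.mem_singleton_iff] at hx ⊢
  by_contra hne
  exact hx.2 fun h => hne (by simpa using h)

private lemma isClosed_N5 (α : W5) (F : Finset ℕ) : IsClosed[t5] (N5 α F) := by
  rw [← @isOpen_compl_iff _ _ t5]
  intro β hβ
  have hβα : β ≠ α := fun h => hβ (h ▸ mem_N5_self α F)
  have hsub : Afam β \ pre5 (N5 α F)ᶜ ⊆ Afam β ∩ Afam α := by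
    intro x hx
    simp only [pre5, Set.mem_diff, Set.mem_setOf_eq, Set.mem_compl_iff, not_not] at hx
    have := hx.2
    rcases this with h | ⟨y, hy, hye⟩
    · exact absurd h (by simp)
    · have : y = x := Sum.inl_injective hye
      exact ⟨hx.1, (this ▸ hy).1⟩
  exact (Afam_AD hβα).subset hsub

private lemma isClosed_inr_image (T : Set W5) : IsClosed[t5] (Sum.inr '' T) := by
  rw [← @isOpen_compl_iff _ _ t5]
  intro β _
  have : Afam β \ pre5 (Sum.inr '' T)ᶜ = ∅ := by
    ext x
    simp [pre5]
  simp [this]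

private lemma nhds_inr_basis (α : W5) :
    (@nhds _ t5 (Sum.inr α)).HasBasis (fun _ : Finset ℕ => True) (fun F => N5 α F) := by
  constructor
  intro t
  rw [@mem_nhds_iff _ t5]
  constructor
  · rintro ⟨U, hUt, hUopen, hαU⟩
    refine ⟨(hUopen α hαU).toFinset, trivial, ?_⟩
    refine subset_trans ?_ hUt
    rintro x (h | ⟨m, hm, rfl⟩)
    · simpa [Set.mem_singleton_iff.mp h] using hαU
    · simp only [Set.mem_diff, Set.Finite.coe_toFinset] at hm
      have : m ∈ pre5 U := by
        by_contra h'
        exact hm.2 ⟨hm.1, h'⟩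
      exact this
  · rintro ⟨F, -, hFt⟩
    exact ⟨N5 α F, hFt, isOpen_N5 α F, mem_N5_self α F⟩

private lemma basis_mem (U : Set (ℕ ⊕ W5)) (hU : IsOpen[t5] U) (x : ℕ ⊕ W5) (hx : x ∈ U) :
    ∃ v, ((∃ n, v = {Sum.inl n}) ∨ ∃ α F, v = N5 α F) ∧ x ∈ v ∧ v ⊆ U := by
  rcases x with n | α
  · exact ⟨{Sum.inl n}, Or.inl ⟨n, rfl⟩, rfl, by simpa using hx⟩
  · refine ⟨N5 α (hU α hx).toFinset, Or.inr ⟨α, _, rfl⟩, mem_N5_self _ _, ?_⟩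
    rintro y (h | ⟨m, hm, rfl⟩)
    · simpa [Set.mem_singleton_iff.mp h] using hx
    · simp only [Set.mem_diff, Set.Finite.coe_toFinset] at hm
      by_contra h'
      exact hm.2 ⟨hm.1, h'⟩

private lemma W5_uncountable : ¬ (Set.univ : Set W5).Countable := by
  intro h
  have : Countable W5 := by
    rw [← Set.countable_univ_iff]; exact h
  have h1 : #W5 ≤ ℵ₀ := Cardinal.mk_le_aleph0
  rw [W5_card] at h1
  exact absurd h1 (not_le.mpr Cardinal.aleph0_lt_aleph_one)

private lemma W5_countable_bddAbove {c : Set W5} (h : c.Countable) :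
    ∃ b : W5, ∀ x ∈ c, x ≤ b := by
  by_contra hb
  push_neg at hb
  apply W5_uncountable
  have hsub : (Set.univ : Set W5) ⊆ ⋃ x ∈ c, Set.Iic x := by
    intro b _
    obtain ⟨x, hxc, hbx⟩ := hb b
    exact Set.mem_biUnion hxc hbx.le
  refine Set.Countable.mono hsub ?_
  refine Set.Countable.biUnion h fun x _ => ?_
  have : Set.Iic x ⊆ Set.Iio x ∪ {x} := by
    intro y hy
    rcases lt_or_eq_of_le (Set.mem_Iic.mp hy) with h' | h'
    · exact Or.inl h'
    · exact Or.inr (by simp [h'])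
  exact Set.Countable.mono this ((W5_Iio_countable x).union (Set.countable_singleton x))

private lemma W5_uncountable_unbounded {S : Set W5} (hS : ¬ S.Countable) (b : W5) :
    ∃ α ∈ S, b < α := by
  by_contra h
  push_neg at h
  apply hS
  refine Set.Countable.mono (fun x hx => ?_) (((W5_Iio_countable b).union
    (Set.countable_singleton b)))
  rcases lt_or_eq_of_le (h x hx) with h' | h'
  · exact Or.inl h'
  · exact Or.inr (by simp [h'])

/-- The core Luzin non-separation argument. -/
private lemma luzin_unseparated {S : Set W5} (hS : ¬ S.Countable) (hS' : ¬ Sᶜ.Countable)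
    {P Q : Set ℕ} (hPQ : ∀ n, ¬ (n ∈ P ∧ n ∈ Q))
    (hP : ∀ α ∈ S, (Afam α \ P).Finite) (hQ : ∀ β ∈ Sᶜ, (Afam β \ Q).Finite) : False := by
  classical
  -- bound functions
  have hPn : ∀ α ∈ S, ∃ n : ℕ, Afam α \ P ⊆ Set.Iio n := by
    intro α hα
    obtain ⟨b, hb⟩ := (hP α hα).bddAbove
    exact ⟨b + 1, fun x hx => Set.mem_Iio.mpr (Nat.lt_succ_of_le (hb hx))⟩
  have hQn : ∀ β ∈ Sᶜ, ∃ n : ℕ, Afam β \ Q ⊆ Set.Iio n := by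
    intro β hβ
    obtain ⟨b, hb⟩ := (hQ β hβ).bddAbove
    exact ⟨b + 1, fun x hx => Set.mem_Iio.mpr (Nat.lt_succ_of_le (hb hx))⟩
  -- find a level n where S-part is uncountable
  have hSn : ∃ n : ℕ, ¬ {α ∈ S | Afam α \ P ⊆ Set.Iio n}.Countable := by
    by_contra h
    push_neg at h
    apply hS
    have : S ⊆ ⋃ n : ℕ, {α ∈ S | Afam α \ P ⊆ Set.Iio n} := by
      intro α hα
      obtain ⟨n, hn⟩ := hPn α hα
      exact Set.mem_iUnion.mpr ⟨n, hα, hn⟩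
    exact Set.Countable.mono this (Set.countable_iUnion h)
  have hTn : ∃ n : ℕ, ¬ {β ∈ Sᶜ | Afam β \ Q ⊆ Set.Iio n}.Countable := by
    by_contra h
    push_neg at h
    apply hS'
    have : Sᶜ ⊆ ⋃ n : ℕ, {β ∈ Sᶜ | Afam β \ Q ⊆ Set.Iio n} := by
      intro β hβ
      obtain ⟨n, hn⟩ := hQn β hβ
      exact Set.mem_iUnion.mpr ⟨n, hβ, hn⟩
    exact Set.Countable.mono this (Set.countable_iUnion h)
  obtain ⟨n₁, hn₁⟩ := hSn
  obtain ⟨n₂, hn₂⟩ := hTn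
  set n := max n₁ n₂ with hn
  set S' := {α ∈ S | Afam α \ P ⊆ Set.Iio n} with hS'def
  set T' := {β ∈ Sᶜ | Afam β \ Q ⊆ Set.Iio n} with hT'def
  have hS'unc : ¬ S'.Countable := by
    intro h
    refine hn₁ (Set.Countable.mono (fun α hα => ?_) h)
    exact ⟨hα.1, hα.2.trans (Set.Iio_subset_Iio (le_max_left _ _))⟩
  have hT'unc : ¬ T'.Countable := by
    intro h
    refine hn₂ (Set.Countable.mono (fun β hβ => ?_) h)
    exact ⟨hβ.1, hβ.2.trans (Set.Iio_subset_Iio (le_max_right _ _))⟩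
  -- T' is infinite; pick countably many elements of T', bounded by b
  have hT'inf : T'.Infinite := fun hfin => hT'unc hfin.countable
  set f := hT'inf.natEmbedding with hf
  have hrange : (Set.range fun k => (f k).1).Countable := Set.countable_range _
  obtain ⟨b, hb⟩ := W5_countable_bddAbove hrange
  obtain ⟨α, hαS', hbα⟩ := W5_uncountable_unbounded hS'unc b
  -- infinitely many β ∈ T' with β < α and Afam α ∩ Afam β ⊆ Iio n
  have key : ∀ β ∈ T', β < α → Afam α ∩ Afam β ⊆ Set.Iio n := by
    intro β hβ _ x hx
    by_contra hxn
    have hxP : x ∈ P := by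
      by_contra h
      exact hxn (hαS'.2 ⟨hx.1, h⟩)
    have hxQ : x ∈ Q := by
      by_contra h
      exact hxn (hβ.2 ⟨hx.2, h⟩)
    exact hPQ x ⟨hxP, hxQ⟩
  -- contradiction with Afam_good
  have hfin := (Afam_good α).2.2.2 n
  have hlt : ∀ k : ℕ, ((f k).1 : W5) < α := fun k =>
    lt_of_le_of_lt (hb _ ⟨k, rfl⟩) hbα
  have hinj : Function.Injective (fun k : ℕ =>
      (⟨(f k).1, hlt k⟩ : {b : W5 // b < α})) := by
    intro i j hij
    simp only [Subtype.mk.injEq] at hij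
    exact f.injective (Subtype.ext hij)
  have hmemb : ∀ k : ℕ, (⟨(f k).1, hlt k⟩ : {b : W5 // b < α}) ∈
      {β : {b : W5 // b < α} | Afam α ∩ Afam β.1 ⊆ Set.Iio n} := by
    intro k
    exact key (f k).1 (f k).2 (hlt k)
  exact (Set.infinite_of_injective_forall_mem hinj hmemb) hfin

private lemma exists_partition : ∃ S : Set W5, ¬ S.Countable ∧ ¬ Sᶜ.Countable := by
  have h1 : #(W5 ⊕ W5) = #W5 := by
    rw [Cardinal.mk_sum, Cardinal.lift_id, W5_card]
    exact Cardinal.add_eq_right Cardinal.aleph0_lt_aleph_one.le le_rfl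
  obtain ⟨g⟩ := Cardinal.eq.mp h1
  have himg : ∀ T : Type, ∀ f : T → W5 ⊕ W5, Function.Injective f → ¬ Countable T →
      ¬ (g '' Set.range f).Countable := by
    intro T f hf hT h
    apply hT
    have h2 : (Set.range f).Countable := by
      have := h.preimage g.injective
      rwa [Set.preimage_image_eq _ g.injective] at this
    have : Countable (Set.range f) := h2.to_subtype
    exact Countable.of_equiv _ (Equiv.ofInjective f hf).symm
  refine ⟨g '' Set.range Sum.inl, himg W5 Sum.inl Sum.inl_injective ?_, ?_⟩
  · intro h
    exact W5_uncountable (@Set.countable_univ _ h)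
  · have : (g '' Set.range Sum.inl)ᶜ = g '' Set.range Sum.inr := by
      rw [← Set.image_compl_eq g.bijective, Set.compl_range_inl]
    rw [this]
    refine himg W5 Sum.inr Sum.inr_injective ?_
    intro h
    exact W5_uncountable (@Set.countable_univ _ h)

/-- there is a regular zero-dimensional separable first-countable
non-normal space of cardinality `ω₁`. -/
theorem stmt_5 :
    ∃ (X : Type) (_ : TopologicalSpace X),
      T3Space X ∧ ZeroDim X ∧ SeparableSpace X ∧ FirstCountableTopology X ∧
      ¬ NormalSpace X ∧ #X = aleph 1 := by
  classical
  refine ⟨ℕ ⊕ W5, t5, ?_, ?_, ?_, ?_, ?_, ?_⟩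
  · -- T3
    letI := t5
    haveI hT2 : T2Space (ℕ ⊕ W5) := by
      constructor
      intro x y hxy
      rcases x with n | α <;> rcases y with m | β
      · refine ⟨{Sum.inl n}, {Sum.inl m}, isOpen_inl_singleton n, isOpen_inl_singleton m,
          rfl, rfl, ?_⟩
        rw [Set.disjoint_left]
        rintro a rfl h
        exact hxy (Set.mem_singleton_iff.mp h)
      · refine ⟨{Sum.inl n}, N5 β {n}, isOpen_inl_singleton n, isOpen_N5 β {n},
          rfl, mem_N5_self β {n}, ?_⟩
        rw [Set.disjoint_left]
        rintro a rfl h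
        rcases h with h | ⟨m', hm', he⟩
        · exact absurd h (by simp)
        · have : m' = n := Sum.inl_injective he
          exact hm'.2 (by simp [this])
      · refine ⟨N5 α {m}, {Sum.inl m}, isOpen_N5 α {m}, isOpen_inl_singleton m,
          mem_N5_self α {m}, rfl, ?_⟩
        rw [Set.disjoint_left]
        rintro a ha h
        rw [Set.mem_singleton_iff.mp h] at ha
        rcases ha with h' | ⟨m', hm', he⟩
        · exact absurd h' (by simp)
        · have : m' = m := Sum.inl_injective he
          exact hm'.2 (by simp [this])
      · have hαβ : α ≠ β := fun h => hxy (by rw [h])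
        refine ⟨N5 α (Afam_AD hαβ).toFinset, N5 β (Afam_AD hαβ).toFinset,
          isOpen_N5 _ _, isOpen_N5 _ _, mem_N5_self _ _, mem_N5_self _ _, ?_⟩
        rw [Set.disjoint_left]
        rintro a ha hb
        rcases ha with h | ⟨m', hm', rfl⟩
        · rw [Set.mem_singleton_iff.mp h] at hb
          exact hαβ (inr_mem_N5 hb)
        · rcases hb with h | ⟨m'', hm'', he⟩
          · exact absurd h (by simp)
          · have hmm : m'' = m' := Sum.inl_injective he
            rw [hmm] at hm''
            have : m' ∈ (Afam_AD hαβ).toFinset := by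
              rw [Set.Finite.mem_toFinset]
              exact ⟨hm'.1, hm''.1⟩
            exact hm'.2 (by simpa using this)
    haveI hreg : RegularSpace (ℕ ⊕ W5) := by
      apply RegularSpace.of_exists_mem_nhds_isClosed_subset
      intro x s hs
      rw [mem_nhds_iff] at hs
      obtain ⟨U, hUs, hUopen, hxU⟩ := hs
      obtain ⟨v, hv, hxv, hvU⟩ := basis_mem U hUopen x hxU
      have hvopen : IsOpen v := by
        rcases hv with ⟨n, rfl⟩ | ⟨α, F, rfl⟩
        · exact isOpen_inl_singleton n
        · exact isOpen_N5 α F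
      have hvclosed : IsClosed v := by
        rcases hv with ⟨n, rfl⟩ | ⟨α, F, rfl⟩
        · exact isClosed_inl_singleton n
        · exact isClosed_N5 α F
      exact ⟨v, hvopen.mem_nhds hxv, hvclosed, hvU.trans hUs⟩
    exact instT3Space
  · -- ZeroDim
    letI := t5
    refine ⟨{s | (∃ n, s = {Sum.inl n}) ∨ ∃ α F, s = N5 α F}, ?_, ?_⟩
    · apply isTopologicalBasis_of_isOpen_of_nhds
      · rintro u (⟨n, rfl⟩ | ⟨α, F, rfl⟩)
        · exact isOpen_inl_singleton n
        · exact isOpen_N5 α F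
      · intro x U hxU hUopen
        obtain ⟨v, hv, hxv, hvU⟩ := basis_mem U hUopen x hxU
        exact ⟨v, hv, hxv, hvU⟩
    · rintro s (⟨n, rfl⟩ | ⟨α, F, rfl⟩)
      · exact ⟨isClosed_inl_singleton n, isOpen_inl_singleton n⟩
      · exact ⟨isClosed_N5 α F, isOpen_N5 α F⟩
  · -- Separable
    letI := t5
    refine ⟨⟨Set.range Sum.inl, Set.countable_range _, ?_⟩⟩
    rw [dense_iff_inter_open]
    rintro U hU ⟨x, hx⟩
    rcases x with n | α
    · exact ⟨Sum.inl n, hx, n, rfl⟩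
    · have hfin := hU α hx
      obtain ⟨m, hm⟩ := ((Afam_inf α).diff hfin).nonempty
      have hmU : m ∈ pre5 U := by
        by_contra h
        exact hm.2 ⟨hm.1, h⟩
      exact ⟨Sum.inl m, hmU, m, rfl⟩
  · -- First countable
    letI := t5
    constructor
    intro x
    rcases x with n | α
    · rw [(isOpen_singleton_iff_nhds_eq_pure _).mp (isOpen_inl_singleton n)]
      exact inferInstance
    · exact (nhds_inr_basis α).isCountablyGenerated
  · -- not normal
    letI := t5
    intro hN
    obtain ⟨S, hS, hS'⟩ := exists_partition
    have hdisj : Disjoint (Sum.inr '' S : Set (ℕ ⊕ W5)) (Sum.inr '' Sᶜ) := by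
      rw [Set.disjoint_left]
      rintro a ⟨α, hα, rfl⟩ ⟨β, hβ, he⟩
      rw [Sum.inr_injective he] at hβ
      exact hβ hα
    obtain ⟨U, V, hUopen, hVopen, hF₀U, hF₁V, hUV⟩ :=
      hN.normal _ _ (isClosed_inr_image S) (isClosed_inr_image Sᶜ) hdisj
    refine luzin_unseparated hS hS' (P := pre5 U) (Q := pre5 V) ?_ ?_ ?_
    · intro n ⟨h1, h2⟩
      exact Set.disjoint_left.mp hUV h1 h2
    · intro α hα
      exact hUopen α (hF₀U ⟨α, hα, rfl⟩)
    · intro β hβ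
      exact hVopen β (hF₁V ⟨β, hβ, rfl⟩)
  · -- cardinality
    rw [Cardinal.mk_sum, Cardinal.lift_id, Cardinal.lift_id, W5_card, Cardinal.mk_nat]
    exact Cardinal.add_eq_right Cardinal.aleph0_lt_aleph_one.le Cardinal.aleph0_lt_aleph_one.le
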